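/- There exists no sequence x : ℕ → ℕ of the form x(n) = vᵀ Mⁿ w (for some dimension d, matrix M with natural number entries, and vectors v, w with natural number entries) satisfying x(8n+1) > x(9n+2) for all n. -/

import Mathlib

open Matrix Finset
open scoped Classical

namespace Stmt1Aux

variable {d : ℕ}

lemma pow_diag_ge (A : Matrix (Fin d) (Fin d) ℕ) (k : Fin d) (h : 1 ≤ A k k) :
    ∀ m, 1 ≤ (A ^ m) k k := by
  intro m
  induction m with
  | zero => simp
  | succ m ih =>
    rw [pow_succ, Matrix.mul_apply]
    calc 1 = 1 * 1 := by ring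
    _ ≤ (A ^ m) k k * A k k := Nat.mul_le_mul ih h
    _ ≤ ∑ l, (A ^ m) k l * A l k :=
        Finset.single_le_sum (f := fun l => (A ^ m) k l * A l k)
          (fun l _ => Nat.zero_le _) (Finset.mem_univ k)

lemma path_exists (A : Matrix (Fin d) (Fin d) ℕ) :
    ∀ m i j, (A ^ m) i j ≠ 0 →
      ∃ g : ℕ → Fin d, g 0 = i ∧ g m = j ∧ ∀ t < m, A (g t) (g (t+1)) ≠ 0 := by
  intro m
  induction m with
  | zero =>
    intro i j h
    have : i = j := by
      by_contra hij
      rw [pow_zero, Matrix.one_apply_ne hij] at h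
      exact h rfl
    exact ⟨fun _ => i, rfl, this.symm ▸ rfl, by omega⟩
  | succ m ih =>
    intro i j h
    rw [pow_succ', Matrix.mul_apply] at h
    obtain ⟨k, -, hk⟩ := Finset.exists_ne_zero_of_sum_ne_zero h
    have h1 : A i k ≠ 0 := fun h0 => hk (by simp [h0])
    have h2 : (A ^ m) k j ≠ 0 := fun h0 => hk (by simp [h0])
    obtain ⟨g, hg0, hgm, hgs⟩ := ih k j h2
    refine ⟨fun t => if t = 0 then i else g (t - 1), by simp, by simp [hgm], ?_⟩
    intro t ht
    rcases Nat.eq_zero_or_pos t with rfl | htpos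
    · simpa [hg0] using h1
    · have h3 : ¬ (t = 0) := by omega
      have h4 : ¬ (t + 1 = 0) := by omega
      simp only [h3, h4, if_false]
      have h5 : t + 1 - 1 = t - 1 + 1 := by omega
      rw [h5]
      exact hgs (t - 1) (by omega)

lemma path_pow_pos (A : Matrix (Fin d) (Fin d) ℕ) :
    ∀ m (g : ℕ → Fin d), (∀ t < m, A (g t) (g (t+1)) ≠ 0) → 1 ≤ (A ^ m) (g 0) (g m) := by
  intro m
  induction m with
  | zero => intro g _; simp
  | succ m ih =>
    intro g hg
    have h1 := ih g (fun t ht => hg t (by omega))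
    have h2 : 1 ≤ A (g m) (g (m+1)) := Nat.one_le_iff_ne_zero.2 (hg m (by omega))
    rw [pow_succ, Matrix.mul_apply]
    calc 1 = 1 * 1 := by ring
    _ ≤ (A ^ m) (g 0) (g m) * A (g m) (g (m+1)) := Nat.mul_le_mul h1 h2
    _ ≤ ∑ l, (A ^ m) (g 0) l * A l (g (m+1)) :=
        Finset.single_le_sum (f := fun l => (A ^ m) (g 0) l * A l (g (m+1)))
          (fun l _ => Nat.zero_le _) (Finset.mem_univ (g m))

lemma decomp (D E M : Matrix (Fin d) (Fin d) ℕ) (hDE : D + E = 1) (n : ℕ) :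
    M ^ n = (∑ τ ∈ Finset.range n, (D*M)^τ * (E * M^(n-τ))) + (D*M)^n := by
  induction n with
  | zero => simp
  | succ n ih =>
    have key : M ^ (n+1) = D*M*(M^n) + E*(M^(n+1)) := by
      calc M ^ (n+1) = (D + E) * M^(n+1) := by rw [hDE, one_mul]
      _ = D * M^(n+1) + E * M^(n+1) := add_mul _ _ _
      _ = D*M*(M^n) + E*(M^(n+1)) := by rw [pow_succ' M n, ← mul_assoc]
    rw [key, ih, mul_add, Finset.mul_sum, Finset.sum_range_succ']
    simp only [pow_zero, one_mul, Nat.succ_sub_succ]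
    rw [← pow_succ']
    have : ∀ τ ∈ Finset.range n, D*M*((D*M)^τ * (E * M^(n-τ)))
        = (D*M)^(τ+1) * (E * M^(n-τ)) := by
      intro τ _
      rw [pow_succ']
      exact (mul_assoc _ _ _).symm
    rw [Finset.sum_congr rfl fun τ hτ => (this τ hτ).symm]
    abel


def Rpred (M : Matrix (Fin d) (Fin d) ℕ) (k : Fin d) : Prop :=
  ∃ c, 0 < c ∧ c ≤ d ∧ 1 ≤ (M ^ c) k k

noncomputable def Ediag (M : Matrix (Fin d) (Fin d) ℕ) : Matrix (Fin d) (Fin d) ℕ :=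
  Matrix.diagonal fun k => if Rpred M k then 1 else 0

noncomputable def Ddiag (M : Matrix (Fin d) (Fin d) ℕ) : Matrix (Fin d) (Fin d) ℕ :=
  Matrix.diagonal fun k => if Rpred M k then 0 else 1

lemma DE_add (M : Matrix (Fin d) (Fin d) ℕ) : Ddiag M + Ediag M = 1 := by
  ext i j
  by_cases hij : i = j
  · subst hij
    by_cases h : Rpred M i <;>
      simp [Ddiag, Ediag, Matrix.diagonal_apply, Matrix.one_apply, h]
  · simp [Ddiag, Ediag, Matrix.diagonal_apply, Matrix.one_apply, hij]

lemma DM_apply (M : Matrix (Fin d) (Fin d) ℕ) (u v : Fin d) (h : (Ddiag M * M) u v ≠ 0) :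
    ¬ Rpred M u ∧ M u v ≠ 0 := by
  rw [Ddiag, Matrix.diagonal_mul] at h
  constructor
  · intro hR; rw [if_pos hR] at h; simp at h
  · intro h0; rw [h0] at h; simp at h

lemma DM_nilpotent (M : Matrix (Fin d) (Fin d) ℕ) : (Ddiag M * M) ^ (d + 1) = 0 := by
  ext i j
  simp only [Matrix.zero_apply]
  by_contra h
  obtain ⟨g, hg0, hgm, hgs⟩ := path_exists (Ddiag M * M) (d+1) i j h
  have hnR : ∀ t, t ≤ d → ¬ Rpred M (g t) := fun t ht =>
    (DM_apply M (g t) (g (t+1)) (hgs t (by omega))).1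
  have hM : ∀ t < d + 1, M (g t) (g (t+1)) ≠ 0 := fun t ht =>
    (DM_apply M (g t) (g (t+1)) (hgs t ht)).2
  obtain ⟨a, b, hab, heq⟩ := Fintype.exists_ne_map_eq_of_card_lt
    (fun t : Fin (d+1) => g t) (by simp)
  rcases hab.lt_or_gt with hlt | hlt
  case _ =>
    exact hnR a.val (by omega) ⟨b.val - a.val, by omega, by omega,
      by
        have := path_pow_pos M (b.val - a.val) (fun t => g (a.val + t))
          (fun t ht => hM (a.val + t) (by omega))
        simpa [show a.val + (b.val - a.val) = b.val by omega, heq] using this⟩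
  case _ =>
    exact hnR b.val (by omega) ⟨a.val - b.val, by omega, by omega,
      by
        have := path_pow_pos M (a.val - b.val) (fun t => g (b.val + t))
          (fun t ht => hM (b.val + t) (by omega))
        simpa [show b.val + (a.val - b.val) = a.val by omega, heq] using this⟩

lemma EMp_ge (M : Matrix (Fin d) (Fin d) ℕ) :
    ∀ k j, Ediag M k j ≤ (Ediag M * M ^ (Nat.factorial d)) k j := by
  intro k j
  rw [Ediag, Matrix.diagonal_mul, Matrix.diagonal_apply]
  split_ifs with hkj hR
  · subst hkj
    obtain ⟨c, hc0, hcd, hc⟩ := hR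
    obtain ⟨m, hm⟩ := Nat.dvd_factorial hc0 hcd
    rw [one_mul, hm, pow_mul]
    exact pow_diag_ge (M ^ c) k hc m
  all_goals exact Nat.zero_le _

lemma mul_mono_left {A B C : Matrix (Fin d) (Fin d) ℕ} (h : ∀ i j, A i j ≤ B i j) :
    ∀ i j, (C * A) i j ≤ (C * B) i j := by
  intro i j
  rw [Matrix.mul_apply, Matrix.mul_apply]
  exact Finset.sum_le_sum fun k _ => Nat.mul_le_mul_left _ (h k j)

lemma mul_mono_right {A B C : Matrix (Fin d) (Fin d) ℕ} (h : ∀ i j, A i j ≤ B i j) :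
    ∀ i j, (A * C) i j ≤ (B * C) i j := by
  intro i j
  rw [Matrix.mul_apply, Matrix.mul_apply]
  exact Finset.sum_le_sum fun k _ => Nat.mul_le_mul_right _ (h i k)

/-- the key pumping step -/
lemma pump (M : Matrix (Fin d) (Fin d) ℕ) (m : ℕ) :
    ∀ i j, (M ^ (d + 1 + m)) i j ≤ (M ^ (d + 1 + m + Nat.factorial d)) i j := by
  set p := Nat.factorial d with hp
  set D := Ddiag M
  set E := Ediag M
  have hdec : M ^ (d+1) = ∑ τ ∈ Finset.range (d+1), (D*M)^τ * (E * M^(d+1-τ)) := by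
    have := decomp D E M (DE_add M) (d+1)
    rwa [DM_nilpotent M, add_zero] at this
  have e1 : M ^ (d + 1 + m) = ∑ τ ∈ Finset.range (d+1), (D*M)^τ * (E * M^(d+1-τ+m)) := by
    rw [pow_add, hdec, Finset.sum_mul]
    refine Finset.sum_congr rfl fun τ hτ => ?_
    rw [mul_assoc, mul_assoc, ← pow_add]
  have e2 : M ^ (d + 1 + m + p)
      = ∑ τ ∈ Finset.range (d+1), (D*M)^τ * ((E * M^p) * M^(d+1-τ+m)) := by
    rw [show d + 1 + m + p = (d+1) + (p + m) by ring, pow_add, hdec, Finset.sum_mul]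
    refine Finset.sum_congr rfl fun τ hτ => ?_
    have harith : d + 1 - τ + (p + m) = p + (d + 1 - τ + m) := by omega
    rw [mul_assoc, mul_assoc, mul_assoc, ← pow_add, ← pow_add, harith]
  intro i j
  rw [e1, e2, Matrix.sum_apply, Matrix.sum_apply]
  refine Finset.sum_le_sum fun τ _ => ?_
  exact mul_mono_left (A := E * M^(d+1-τ+m)) (B := (E * M^p) * M^(d+1-τ+m))
    (fun a b => mul_mono_right (EMp_ge M) a b) i j

lemma dot_mono {A B : Matrix (Fin d) (Fin d) ℕ} (v w : Fin d → ℕ)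
    (h : ∀ i j, A i j ≤ B i j) :
    dotProduct v (A.mulVec w) ≤ dotProduct v (B.mulVec w) := by
  have e : ∀ (A : Matrix (Fin d) (Fin d) ℕ),
      dotProduct v (A.mulVec w) = ∑ i, v i * ∑ j, A i j * w j := fun A => rfl
  rw [e, e]
  exact Finset.sum_le_sum fun i _ => Nat.mul_le_mul_left _
    (Finset.sum_le_sum fun j _ => Nat.mul_le_mul_right _ (h i j))

end Stmt1Aux

theorem stmt_1 :
    ¬ ∃ (d : ℕ) (M : Matrix (Fin d) (Fin d) ℕ) (v w : Fin d → ℕ),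
      ∀ n : ℕ,
        dotProduct v ((M ^ (8 * n + 1)).mulVec w) >
          dotProduct v ((M ^ (9 * n + 2)).mulVec w) := by
  rintro ⟨d, M, v, w, h⟩
  set p := Nat.factorial d with hp
  have hp1 : 1 ≤ p := Nat.one_le_iff_ne_zero.2 (Nat.factorial_ne_zero d)
  -- monotone iteration
  have iter : ∀ k m, dotProduct v ((M ^ (d + 1 + m)).mulVec w)
      ≤ dotProduct v ((M ^ (d + 1 + m + k * p)).mulVec w) := by
    intro k
    induction k with
    | zero => intro m; simp
    | succ k ih =>
      intro m
      calc dotProduct v ((M ^ (d + 1 + m)).mulVec w)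
          ≤ dotProduct v ((M ^ (d + 1 + m + k * p)).mulVec w) := ih m
        _ = dotProduct v ((M ^ (d + 1 + (m + k * p))).mulVec w) := by
            rw [show d + 1 + m + k * p = d + 1 + (m + k * p) by ring]
        _ ≤ dotProduct v ((M ^ (d + 1 + (m + k * p) + p)).mulVec w) :=
            Stmt1Aux.dot_mono v w (Stmt1Aux.pump M (m + k * p))
        _ = dotProduct v ((M ^ (d + 1 + m + (k+1) * p)).mulVec w) := by
            rw [show d + 1 + (m + k * p) + p = d + 1 + m + (k+1) * p by ring]
  set N := p * (d + 2) - 1 with hN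
  have h1 : 8 * N + 1 = d + 1 + (8 * N - d) := by
    have : N ≥ d + 1 := by
      have : p * (d + 2) ≥ 1 * (d + 2) := Nat.mul_le_mul_right _ hp1
      omega
    omega
  have h2 : 9 * N + 2 = d + 1 + (8 * N - d) + (d + 2) * p := by
    have hNp : N + 1 = p * (d + 2) := by
      have : p * (d + 2) ≥ 1 * (d + 2) := Nat.mul_le_mul_right _ hp1
      omega
    have : 9 * N + 2 = (8 * N + 1) + (N + 1) := by ring
    rw [this, h1, hNp]
    ring
  have := iter (d + 2) (8 * N - d)
  rw [← h2, ← h1] at this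
  exact absurd (h N) (not_lt.2 this)
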